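/- (Lemma 1) Let λ ≥ 0, let θ ∈ ℝ^d, let Σ be positive definite, and let Y ⊆ ℝ^m. Suppose θ − θ* ∈ S(λ, Y; Σ), and suppose x₁ is an optimal solution of the robust optimization problem with scale λ, center θ and shape Σ, x₂ is an optimal solution of the robust optimization problem with scale 2λ, center θ* and shape Σ, and x₁, x₂ ∈ Y. Then f*(x₁) ≤ f*(x₂). -/

import Mathlib

open MeasureTheory ProbabilityTheory Matrix
open scoped ENNReal Pointwise

/-- The ellipsoid `U_Σ = {u : uᵀ Σ⁻¹ u ≤ 1}`. -/
def USet {d : ℕ} (Sg : Matrix (Fin d) (Fin d) ℝ) : Set (Fin d → ℝ) :=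
  {u | u ⬝ᵥ (Sg⁻¹ *ᵥ u) ≤ 1}

/-- `r_k(x; Σ) = max_{u ∈ U_Σ} g_k(x, u)` where `g_k(x, θ) = θᵀ v_k(x)`. -/
noncomputable def rk {d m K : ℕ} (v : Fin K → (Fin m → ℝ) → (Fin d → ℝ))
    (k : Fin K) (x : Fin m → ℝ) (Sg : Matrix (Fin d) (Fin d) ℝ) : ℝ :=
  sSup ((fun u => u ⬝ᵥ v k x) '' USet Sg)

/-- `S(λ, Y; Σ)`, the set of parameter errors that are uniformly small over `Y`. -/
noncomputable def SErr {d m K : ℕ} (v : Fin K → (Fin m → ℝ) → (Fin d → ℝ))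
    (lam : ℝ) (Y : Set (Fin m → ℝ)) (Sg : Matrix (Fin d) (Fin d) ℝ) : Set (Fin d → ℝ) :=
  {Δ | ∀ k, ∀ y ∈ Y, |Δ ⬝ᵥ v k y| ≤ lam * rk v k y Sg}

/-- Feasibility for the robust optimization problem with scale `lam`, center `θ`, shape `Σ`. -/
def Feasible {d m K : ℕ} (X : Set (Fin m → ℝ)) (v : Fin K → (Fin m → ℝ) → (Fin d → ℝ))
    (lam : ℝ) (θ : Fin d → ℝ) (Sg : Matrix (Fin d) (Fin d) ℝ) (x : Fin m → ℝ) : Prop :=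
  x ∈ X ∧ ∀ k, ∀ u ∈ USet Sg, 0 ≤ (θ + lam • u) ⬝ᵥ v k x

/-- Optimal solution of the robust optimization problem. -/
def IsOptimal {d m K : ℕ} (X : Set (Fin m → ℝ)) (f : (Fin m → ℝ) → ℝ)
    (v : Fin K → (Fin m → ℝ) → (Fin d → ℝ))
    (lam : ℝ) (θ : Fin d → ℝ) (Sg : Matrix (Fin d) (Fin d) ℝ) (x : Fin m → ℝ) : Prop :=
  Feasible X v lam θ Sg x ∧ ∀ y, Feasible X v lam θ Sg y → f x ≤ f y

open Classical in
/-- The true objective `f*`, which is `∞` when a true constraint is violated. -/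
noncomputable def fStar {d m K : ℕ} (f : (Fin m → ℝ) → ℝ)
    (v : Fin K → (Fin m → ℝ) → (Fin d → ℝ)) (θs : Fin d → ℝ) (x : Fin m → ℝ) : EReal :=
  if ∀ k, 0 ≤ θs ⬝ᵥ v k x then (f x : EReal) else ⊤

/-- The standard Gaussian measure on `ℝ^d`. -/
noncomputable def stdGaussian (d : ℕ) : Measure (Fin d → ℝ) :=
  Measure.pi fun _ => gaussianReal 0 1

open Classical in
/-- The positive semidefinite square root (junk value `0` off the psd cone). -/
noncomputable def matSqrt {d : ℕ} (A : Matrix (Fin d) (Fin d) ℝ) : Matrix (Fin d) (Fin d) ℝ :=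
  if h : A.PosSemidef then
    (h.1.eigenvectorUnitary : Matrix (Fin d) (Fin d) ℝ) *
      diagonal ((↑) ∘ (fun x : ℝ => Real.sqrt x) ∘ h.1.eigenvalues) *
      (star h.1.eigenvectorUnitary : Matrix (Fin d) (Fin d) ℝ)
  else 0

/-- The centered Gaussian measure on `ℝ^d` with covariance `A`. -/
noncomputable def gaussOf {d : ℕ} (A : Matrix (Fin d) (Fin d) ℝ) : Measure (Fin d → ℝ) :=
  (stdGaussian d).map (fun z => matSqrt A *ᵥ z)

/-- The Euclidean norm on `Fin d → ℝ`. -/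
noncomputable def euclNorm {d : ℕ} (z : Fin d → ℝ) : ℝ := Real.sqrt (∑ i, z i ^ 2)

/-- Quantile function of the chi distribution with `d` degrees of freedom. -/
noncomputable def chiQuantile (d : ℕ) (p : ℝ) : ℝ :=
  sInf {t : ℝ | 0 ≤ t ∧ p ≤ (stdGaussian d {z | euclNorm z ≤ t}).toReal}

/-- The minimum spatial uniform bound `μ(p, Y; P, Σ)` (`⊤` when infeasible, `0` for `p ≤ 0`). -/
noncomputable def muB {d m K : ℕ} (v : Fin K → (Fin m → ℝ) → (Fin d → ℝ)) (p : ℝ)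
    (Y : Set (Fin m → ℝ)) (P : Measure (Fin d → ℝ)) (Sg : Matrix (Fin d) (Fin d) ℝ) : ℝ≥0∞ :=
  ⨅ (μ : ℝ) (_ : 0 ≤ μ ∧ ENNReal.ofReal p ≤ P (SErr v μ Y Sg)), ENNReal.ofReal μ


lemma zero_mem_USet {d : ℕ} (Sg : Matrix (Fin d) (Fin d) ℝ) : (0 : Fin d → ℝ) ∈ USet Sg := by
  simp [USet]

lemma neg_mem_USet {d : ℕ} {Sg : Matrix (Fin d) (Fin d) ℝ} {u : Fin d → ℝ}
    (hu : u ∈ USet Sg) : -u ∈ USet Sg := by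
  simpa [USet, Matrix.mulVec_neg] using hu

lemma mul_rk_le {d m K : ℕ} (v : Fin K → (Fin m → ℝ) → (Fin d → ℝ)) (k : Fin K)
    (x : Fin m → ℝ) (Sg : Matrix (Fin d) (Fin d) ℝ) {lam c : ℝ} (hlam : 0 ≤ lam)
    (hc : 0 ≤ c) (h : ∀ u ∈ USet Sg, lam * (u ⬝ᵥ v k x) ≤ c) :
    lam * rk v k x Sg ≤ c := by
  rcases eq_or_lt_of_le hlam with h0 | h0
  · simpa [← h0] using hc
  · rw [mul_comm, ← le_div_iff₀ h0]
    apply Real.sSup_le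
    · rintro s ⟨u, hu, rfl⟩
      rw [le_div_iff₀ h0, mul_comm]
      exact h u hu
    · positivity

lemma key_rk {d m K : ℕ} (v : Fin K → (Fin m → ℝ) → (Fin d → ℝ))
    (Sg : Matrix (Fin d) (Fin d) ℝ) (lam' : ℝ) (hlam' : 0 ≤ lam') (θ' : Fin d → ℝ)
    (x : Fin m → ℝ) (hfe : ∀ k, ∀ u ∈ USet Sg, 0 ≤ (θ' + lam' • u) ⬝ᵥ v k x)
    (k : Fin K) : lam' * rk v k x Sg ≤ θ' ⬝ᵥ v k x := by
  have h0 : 0 ≤ θ' ⬝ᵥ v k x := by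
    have := hfe k 0 (zero_mem_USet Sg)
    simpa using this
  refine mul_rk_le v k x Sg hlam' h0 ?_
  intro u hu
  have := hfe k (-u) (neg_mem_USet hu)
  have heq : (θ' + lam' • (-u)) ⬝ᵥ v k x = θ' ⬝ᵥ v k x - lam' * (u ⬝ᵥ v k x) := by
    simp [add_dotProduct, smul_dotProduct, neg_dotProduct,
      smul_eq_mul, mul_neg, sub_eq_add_neg]
  linarith [this, heq ▸ this]

/-- Lemma 1: the subspace version of Fact 1, with `θ − θ* ∈ S(λ, Y; Σ)` and
the two optimal solutions lying in `Y`. -/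
theorem stmt3 {d m K : ℕ} (hd : 1 ≤ d) (hm : 1 ≤ m) (hK : 1 ≤ K)
    (θstar : Fin d → ℝ) (v : Fin K → (Fin m → ℝ) → (Fin d → ℝ))
    (X : Set (Fin m → ℝ)) (f : (Fin m → ℝ) → ℝ)
    (lam : ℝ) (hlam : 0 ≤ lam) (θ : Fin d → ℝ)
    (Sg : Matrix (Fin d) (Fin d) ℝ) (hSg : Sg.PosDef)
    (Y : Set (Fin m → ℝ))
    (hθ : θ - θstar ∈ SErr v lam Y Sg)
    (x₁ x₂ : Fin m → ℝ)
    (h1 : IsOptimal X f v lam θ Sg x₁)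
    (h2 : IsOptimal X f v (2 * lam) θstar Sg x₂)
    (hx₁Y : x₁ ∈ Y) (hx₂Y : x₂ ∈ Y) :
    fStar f v θstar x₁ ≤ fStar f v θstar x₂ := by
  obtain ⟨⟨hx₁X, hx₁f⟩, hx₁opt⟩ := h1
  obtain ⟨⟨hx₂X, hx₂f⟩, hx₂opt⟩ := h2
  have h1key := key_rk v Sg lam hlam θ x₁ hx₁f
  have h2key := key_rk v Sg (2 * lam) (by linarith) θstar x₂ hx₂f
  have hsub : ∀ k (y : Fin m → ℝ), (θ - θstar) ⬝ᵥ v k y = θ ⬝ᵥ v k y - θstar ⬝ᵥ v k y := by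
    intro k y; simp [sub_dotProduct]
  -- true feasibility of x₁
  have htrue1 : ∀ k, 0 ≤ θstar ⬝ᵥ v k x₁ := by
    intro k
    have hb := hθ k x₁ hx₁Y
    rw [hsub k x₁] at hb
    have := abs_le.mp hb
    linarith [h1key k, this.2]
  -- x₂ is feasible for (lam, θ)
  have hfeas2 : Feasible X v lam θ Sg x₂ := by
    refine ⟨hx₂X, fun k u hu => ?_⟩
    have hb := hθ k x₂ hx₂Y
    rw [hsub k x₂] at hb
    have hab := abs_le.mp hb
    have hf := hx₂f k u hu
    have heq1 : (θstar + (2 * lam) • u) ⬝ᵥ v k x₂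
        = θstar ⬝ᵥ v k x₂ + 2 * lam * (u ⬝ᵥ v k x₂) := by
      simp [add_dotProduct, smul_dotProduct, smul_eq_mul]
    have heq2 : (θ + lam • u) ⬝ᵥ v k x₂ = θ ⬝ᵥ v k x₂ + lam * (u ⬝ᵥ v k x₂) := by
      simp [add_dotProduct, smul_dotProduct, smul_eq_mul]
    rw [heq1] at hf
    rw [heq2]
    linarith [h2key k, hab.1, hab.2]
  have hff : f x₁ ≤ f x₂ := hx₁opt x₂ hfeas2
  -- conclude
  rw [fStar, if_pos htrue1, fStar]
  split
  · exact_mod_cast hff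
  · exact le_top
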